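/- Let d, k, l > 0 and let 0 < u < k²/d². Then the set Φ_u = {(x,y) ∈ ℝ² : kux² + ky² − 2udxy − klux + (ud(l+d) − k²)y = 0} is an ellipse (the image of the unit circle under an invertible affine map of ℝ²) passing through all four vertices O=(0,0), P=(l,0), Q=(d,k), R=(l+d,k) of the parallelogram D. Moreover, if Φ_u = {c + a·cos t·(cos θ, sin θ) + b·sin t·(−sin θ, cos θ) : t ∈ ℝ} with c ∈ ℝ², θ ∈ ℝ and a ≥ b > 0, then b²/a² = (k(u+1) − √(k²(1−u)² + 4d²u²))² / (4u(k² − ud²)). -/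

import Mathlib

set_option maxHeartbeats 1000000


/-- The unit circle in `ℝ × ℝ`. -/
def unitCircle : Set (ℝ × ℝ) := {p : ℝ × ℝ | p.1 ^ 2 + p.2 ^ 2 = 1}

/-- A set is an ellipse if it is the image of the unit circle under an
invertible affine map of the plane. -/
def IsEllipse (E : Set (ℝ × ℝ)) : Prop :=
  ∃ f : (ℝ × ℝ) ≃ᵃ[ℝ] (ℝ × ℝ), E = (f : (ℝ × ℝ) → (ℝ × ℝ)) '' unitCircle

noncomputable def triLin (p q r : ℝ) (hp : p ≠ 0) (hr : r ≠ 0) : (ℝ × ℝ) ≃ₗ[ℝ] (ℝ × ℝ) where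
  toFun v := (p * v.1 + q * v.2, r * v.2)
  invFun w := ((w.1 - q * (w.2 / r)) / p, w.2 / r)
  map_add' v w := by ext <;> simp <;> ring
  map_smul' t v := by ext <;> simp <;> ring
  left_inv v := by ext <;> field_simp <;> ring
  right_inv w := by
    ext <;> field_simp
    ring

noncomputable def triAff (p q r x0 y0 : ℝ) (hp : p ≠ 0) (hr : r ≠ 0) : (ℝ × ℝ) ≃ᵃ[ℝ] (ℝ × ℝ) :=
  (triLin p q r hp hr).toAffineEquiv.trans (AffineEquiv.constVAdd ℝ (ℝ × ℝ) (x0, y0))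


theorem stmt_15 (d k l u : ℝ) (hd : 0 < d) (hk : 0 < k) (hl : 0 < l)
    (hu : u ∈ Set.Ioo (0 : ℝ) (k ^ 2 / d ^ 2))
    (Φ : Set (ℝ × ℝ))
    (hΦ : Φ = {p : ℝ × ℝ |
      k * u * p.1 ^ 2 + k * p.2 ^ 2 - 2 * u * d * p.1 * p.2 - k * l * u * p.1
        + (u * d * (l + d) - k ^ 2) * p.2 = 0}) :
    IsEllipse Φ ∧
    ((0 : ℝ), (0 : ℝ)) ∈ Φ ∧ ((l : ℝ), (0 : ℝ)) ∈ Φ ∧ ((d : ℝ), k) ∈ Φ ∧ (l + d, k) ∈ Φ ∧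
    (∀ (c : ℝ × ℝ) (θ a b : ℝ), b ≤ a → 0 < b →
      Φ = {q : ℝ × ℝ | ∃ t : ℝ,
        q = c + (a * Real.cos t) • (Real.cos θ, Real.sin θ)
              + (b * Real.sin t) • (-Real.sin θ, Real.cos θ)} →
      b ^ 2 / a ^ 2 =
        (k * (u + 1) - Real.sqrt (k ^ 2 * (1 - u) ^ 2 + 4 * d ^ 2 * u ^ 2)) ^ 2
          / (4 * u * (k ^ 2 - u * d ^ 2))) := by
  obtain ⟨hu0, hu1⟩ := hu
  have hk0 : (k:ℝ) ≠ 0 := ne_of_gt hk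
  have hud : u * d ^ 2 < k ^ 2 := (lt_div_iff₀ (by positivity)).mp hu1
  obtain ⟨A₁, hA₁⟩ : ∃ x : ℝ, x = k * u := ⟨_, rfl⟩
  obtain ⟨A₂, hA₂⟩ : ∃ x : ℝ, x = (k ^ 2 - u * d ^ 2) / k := ⟨_, rfl⟩
  obtain ⟨c₀, hc₀⟩ : ∃ x : ℝ, x = (k * u * l ^ 2 + k * (k ^ 2 - u * d ^ 2)) / 4 := ⟨_, rfl⟩
  have hA₁pos : 0 < A₁ := by rw [hA₁]; positivity
  have hA₂pos : 0 < A₂ := by rw [hA₂]; exact div_pos (by linarith) hk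
  have hc₀pos : 0 < c₀ := by
    rw [hc₀]
    have h1 : 0 < k * u * l ^ 2 := by positivity
    have h2 : 0 < k * (k ^ 2 - u * d ^ 2) := mul_pos hk (by linarith)
    linarith
  have hmem : ∀ w : ℝ × ℝ, w ∈ Φ ↔
      A₁ * (w.1 - d * w.2 / k - l / 2) ^ 2 + A₂ * (w.2 - k / 2) ^ 2 = c₀ := by
    intro w
    rw [hΦ]
    simp only [Set.mem_setOf_eq]
    have hkey : k * u * w.1 ^ 2 + k * w.2 ^ 2 - 2 * u * d * w.1 * w.2 - k * l * u * w.1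
        + (u * d * (l + d) - k ^ 2) * w.2
        = A₁ * (w.1 - d * w.2 / k - l / 2) ^ 2 + A₂ * (w.2 - k / 2) ^ 2 - c₀ := by
      rw [hA₁, hA₂, hc₀]; field_simp; ring
    rw [hkey]
    constructor <;> intro h <;> linarith
  -- the affine map
  obtain ⟨p, hp2, hp0⟩ : ∃ x : ℝ, A₁ * x ^ 2 = c₀ ∧ x ≠ 0 := by
    refine ⟨Real.sqrt (c₀ / A₁), ?_, ?_⟩
    · rw [Real.sq_sqrt (le_of_lt (div_pos hc₀pos hA₁pos))]
      field_simp
    · exact ne_of_gt (Real.sqrt_pos.mpr (div_pos hc₀pos hA₁pos))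
  obtain ⟨r, hr2, hr0⟩ : ∃ x : ℝ, A₂ * x ^ 2 = c₀ ∧ x ≠ 0 := by
    refine ⟨Real.sqrt (c₀ / A₂), ?_, ?_⟩
    · rw [Real.sq_sqrt (le_of_lt (div_pos hc₀pos hA₂pos))]
      field_simp
    · exact ne_of_gt (Real.sqrt_pos.mpr (div_pos hc₀pos hA₂pos))
  have hEll : IsEllipse Φ := by
    refine ⟨triAff p (d * r / k) r ((l + d) / 2) (k / 2) hp0 hr0, ?_⟩
    ext w
    simp only [Set.mem_image]
    constructor
    · intro hw
      rw [hmem] at hw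
      refine ⟨((w.1 - d * w.2 / k - l / 2) / p, (w.2 - k / 2) / r), ?_, ?_⟩
      · show ((w.1 - d * w.2 / k - l / 2) / p) ^ 2 + ((w.2 - k / 2) / r) ^ 2 = 1
        rw [div_pow, div_pow,
          div_add_div _ _ (pow_ne_zero 2 hp0) (pow_ne_zero 2 hr0),
          div_eq_one_iff_eq (by positivity)]
        refine mul_left_cancel₀ (ne_of_gt hc₀pos) ?_
        linear_combination (p ^ 2 * r ^ 2) * hw - ((w.1 - d * w.2 / k - l / 2) ^ 2 * r ^ 2) * hp2
          - ((w.2 - k / 2) ^ 2 * p ^ 2) * hr2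
      · show ((l + d) / 2 + (p * ((w.1 - d * w.2 / k - l / 2) / p)
            + d * r / k * ((w.2 - k / 2) / r)), k / 2 + r * ((w.2 - k / 2) / r)) = w
        have e1 : (l + d) / 2 + (p * ((w.1 - d * w.2 / k - l / 2) / p)
            + d * r / k * ((w.2 - k / 2) / r)) = w.1 := by field_simp; ring
        have e2 : k / 2 + r * ((w.2 - k / 2) / r) = w.2 := by field_simp; ring
        rw [e1, e2]
    · rintro ⟨v, hv, rfl⟩
      have hv' : v.1 ^ 2 + v.2 ^ 2 = 1 := hv
      rw [hmem]
      show A₁ * (((l + d) / 2 + (p * v.1 + d * r / k * v.2)) - d * (k / 2 + r * v.2) / k - l / 2) ^ 2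
          + A₂ * ((k / 2 + r * v.2) - k / 2) ^ 2 = c₀
      have harg : ((l + d) / 2 + (p * v.1 + d * r / k * v.2)) - d * (k / 2 + r * v.2) / k - l / 2
          = p * v.1 := by field_simp; ring
      have harg2 : (k / 2 + r * v.2) - k / 2 = r * v.2 := by ring
      rw [harg, harg2]
      linear_combination c₀ * hv' + (v.1 ^ 2) * hp2 + (v.2 ^ 2) * hr2
  refine ⟨hEll, ?_, ?_, ?_, ?_, ?_⟩
  · rw [hΦ]; simp only [Set.mem_setOf_eq]; norm_num
  · rw [hΦ]; simp only [Set.mem_setOf_eq]; ring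
  · rw [hΦ]; simp only [Set.mem_setOf_eq]; ring
  · rw [hΦ]; simp only [Set.mem_setOf_eq]; ring
  · intro c θ a b hba hb hpar
    have ha : 0 < a := lt_of_lt_of_le hb hba
    have hpy : Real.sin θ ^ 2 + Real.cos θ ^ 2 = 1 := Real.sin_sq_add_cos_sq θ
    obtain ⟨s₁, hs₁⟩ : ∃ x : ℝ, x = Real.cos θ - d * Real.sin θ / k := ⟨_, rfl⟩
    obtain ⟨s₂, hs₂⟩ : ∃ x : ℝ, x = -Real.sin θ - d * Real.cos θ / k := ⟨_, rfl⟩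
    obtain ⟨m₁, hm₁⟩ : ∃ x : ℝ, x = c.1 - d * c.2 / k - l / 2 := ⟨_, rfl⟩
    obtain ⟨m₂, hm₂⟩ : ∃ x : ℝ, x = c.2 - k / 2 := ⟨_, rfl⟩
    have H : ∀ t : ℝ,
        A₁ * (m₁ + a * Real.cos t * s₁ + b * Real.sin t * s₂) ^ 2
          + A₂ * (m₂ + a * Real.cos t * Real.sin θ + b * Real.sin t * Real.cos θ) ^ 2 = c₀ := by
      intro t
      have hPt : c + (a * Real.cos t) • (Real.cos θ, Real.sin θ)
          + (b * Real.sin t) • (-Real.sin θ, Real.cos θ) ∈ Φ := by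
        rw [hpar]; exact ⟨t, rfl⟩
      rw [hmem] at hPt
      simp only [Prod.fst_add, Prod.snd_add, Prod.smul_mk, smul_eq_mul] at hPt
      rw [hs₁, hs₂, hm₁, hm₂]
      linear_combination hPt
    have e0 := H 0
    have epi := H Real.pi
    have eh := H (Real.pi / 2)
    have e3 := H (-(Real.pi / 2))
    have e4 := H (Real.pi / 4)
    simp only [Real.cos_zero, Real.sin_zero, Real.cos_pi, Real.sin_pi, Real.cos_pi_div_two,
      Real.sin_pi_div_two, Real.cos_neg, Real.sin_neg, Real.cos_pi_div_four,
      Real.sin_pi_div_four] at e0 epi eh e3 e4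
    have h2 : Real.sqrt 2 ^ 2 = 2 := Real.sq_sqrt (by norm_num)
    -- linear relations
    have hD : A₁ * (m₁ * s₁) + A₂ * (m₂ * Real.sin θ) = 0 := by
      have h4 : (4 * a) * (A₁ * (m₁ * s₁) + A₂ * (m₂ * Real.sin θ)) = 0 := by
        linear_combination e0 - epi
      rcases mul_eq_zero.mp h4 with h | h
      · exfalso; linarith
      · exact h
    have hE : A₁ * (m₁ * s₂) + A₂ * (m₂ * Real.cos θ) = 0 := by
      have h4 : (4 * b) * (A₁ * (m₁ * s₂) + A₂ * (m₂ * Real.cos θ)) = 0 := by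
        linear_combination eh - e3
      rcases mul_eq_zero.mp h4 with h | h
      · exfalso; linarith
      · exact h
    have hMa : A₁ * m₁ ^ 2 + A₂ * m₂ ^ 2
        + a ^ 2 * (A₁ * s₁ ^ 2 + A₂ * Real.sin θ ^ 2) = c₀ := by
      linear_combination (1/2) * e0 + (1/2) * epi
    have hMb : A₁ * m₁ ^ 2 + A₂ * m₂ ^ 2
        + b ^ 2 * (A₁ * s₂ ^ 2 + A₂ * Real.cos θ ^ 2) = c₀ := by
      linear_combination (1/2) * eh + (1/2) * e3
    have habγ : a * b * (A₁ * (s₁ * s₂) + A₂ * (Real.sin θ * Real.cos θ)) = 0 := by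
      linear_combination e4 - (1/2) * hMa - (1/2) * hMb - (Real.sqrt 2 * a) * hD
        - (Real.sqrt 2 * b) * hE
        - ((a ^ 2 * (A₁ * s₁ ^ 2 + A₂ * Real.sin θ ^ 2)
            + 2 * a * b * (A₁ * (s₁ * s₂) + A₂ * (Real.sin θ * Real.cos θ))
            + b ^ 2 * (A₁ * s₂ ^ 2 + A₂ * Real.cos θ ^ 2)) / 4) * h2
    have hγ : A₁ * (s₁ * s₂) + A₂ * (Real.sin θ * Real.cos θ) = 0 := by
      rcases mul_eq_zero.mp habγ with h | h
      · exact absurd h (ne_of_gt (mul_pos ha hb))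
      · exact h
    have hab : a ^ 2 * (A₁ * s₁ ^ 2 + A₂ * Real.sin θ ^ 2)
        = b ^ 2 * (A₁ * s₂ ^ 2 + A₂ * Real.cos θ ^ 2) := by
      linear_combination hMa - hMb
    -- polynomial versions
    have hkα : k ^ 2 * (A₁ * s₁ ^ 2 + A₂ * Real.sin θ ^ 2)
        = k * u * (k * Real.cos θ - d * Real.sin θ) ^ 2
          + (k ^ 2 - u * d ^ 2) * k * Real.sin θ ^ 2 := by
      rw [hA₁, hA₂, hs₁]; field_simp
    have hkβ : k ^ 2 * (A₁ * s₂ ^ 2 + A₂ * Real.cos θ ^ 2)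
        = k * u * (k * Real.sin θ + d * Real.cos θ) ^ 2
          + (k ^ 2 - u * d ^ 2) * k * Real.cos θ ^ 2 := by
      rw [hA₁, hA₂, hs₂]; field_simp; ring
    have hkγ : k ^ 2 * (A₁ * (s₁ * s₂) + A₂ * (Real.sin θ * Real.cos θ))
        = -(k * u * (k * Real.cos θ - d * Real.sin θ) * (k * Real.sin θ + d * Real.cos θ))
          + (k ^ 2 - u * d ^ 2) * k * (Real.sin θ * Real.cos θ) := by
      rw [hA₁, hA₂, hs₁, hs₂]; field_simp; ring
    obtain ⟨α, hα⟩ : ∃ x : ℝ, x = A₁ * s₁ ^ 2 + A₂ * Real.sin θ ^ 2 := ⟨_, rfl⟩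
    obtain ⟨β, hβ⟩ : ∃ x : ℝ, x = A₁ * s₂ ^ 2 + A₂ * Real.cos θ ^ 2 := ⟨_, rfl⟩
    rw [← hα] at hab hkα hMa
    rw [← hβ] at hab hkβ hMb
    have hsum : α + β = k * (u + 1) := by
      have h2' : k ^ 2 * (α + β) = k ^ 2 * (k * (u + 1)) := by
        linear_combination hkα + hkβ + (k ^ 3 * (u + 1)) * hpy
      exact mul_left_cancel₀ (pow_ne_zero 2 hk0) h2'
    have hdet : α * β = u * (k ^ 2 - u * d ^ 2) := by
      have h4' : k ^ 4 * (α * β) = k ^ 4 * (u * (k ^ 2 - u * d ^ 2)) := by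
        linear_combination (k ^ 2 * β) * hkα
          + (k * u * (k * Real.cos θ - d * Real.sin θ) ^ 2
              + (k ^ 2 - u * d ^ 2) * k * Real.sin θ ^ 2) * hkβ
          - (k ^ 2 * (A₁ * (s₁ * s₂) + A₂ * (Real.sin θ * Real.cos θ))
              + (-(k * u * (k * Real.cos θ - d * Real.sin θ) * (k * Real.sin θ + d * Real.cos θ))
                + (k ^ 2 - u * d ^ 2) * k * (Real.sin θ * Real.cos θ))) * hkγ
          + (k ^ 4 * u * (k ^ 2 - u * d ^ 2) * ((Real.sin θ ^ 2 + Real.cos θ ^ 2) + 1)) * hpy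
          + (k ^ 4 * (A₁ * (s₁ * s₂) + A₂ * (Real.sin θ * Real.cos θ))) * hγ
      exact mul_left_cancel₀ (pow_ne_zero 4 hk0) h4'
    have hprod : 0 < u * (k ^ 2 - u * d ^ 2) := mul_pos hu0 (by linarith)
    have hkup : 0 < k * (u + 1) := mul_pos hk (by linarith)
    have hβpos : 0 < β := by
      by_contra hcon
      push_neg at hcon
      have h1 : 0 < α := by linarith
      have h2 : α * β ≤ 0 := mul_nonpos_iff.mpr (Or.inl ⟨h1.le, hcon⟩)
      linarith [hdet, hprod, h2]
    have hαpos : 0 < α := by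
      by_contra hcon
      push_neg at hcon
      have h1 : 0 < β := by linarith
      have h2 : α * β ≤ 0 := mul_nonpos_iff.mpr (Or.inr ⟨hcon, h1.le⟩)
      linarith [hdet, hprod, h2]
    have hαβ : α ≤ β := by
      have hb2 : 0 < b ^ 2 := by positivity
      have h1 : b ^ 2 * α ≤ b ^ 2 * β := by
        calc b ^ 2 * α ≤ a ^ 2 * α :=
              mul_le_mul_of_nonneg_right (pow_le_pow_left₀ hb.le hba 2) hαpos.le
          _ = b ^ 2 * β := hab
      exact (mul_le_mul_iff_right₀ hb2).mp h1
    have hx : k ^ 2 * (1 - u) ^ 2 + 4 * d ^ 2 * u ^ 2 = (β - α) ^ 2 := by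
      linear_combination -(α + β + k * (u + 1)) * hsum + 4 * hdet
    rw [hx, Real.sqrt_sq (by linarith)]
    have h2α : k * (u + 1) - (β - α) = 2 * α := by linarith
    rw [h2α]
    have hden : 4 * u * (k ^ 2 - u * d ^ 2) = 4 * (α * β) := by linear_combination -4 * hdet
    rw [hden, div_eq_div_iff (ne_of_gt (pow_pos ha 2)) (ne_of_gt (mul_pos (by norm_num : (0:ℝ) < 4) (mul_pos hαpos hβpos)))]
    linear_combination (-4 * α) * hab
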